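/- arXiv:1104.0280 — 4 statements merged into one kernel-verified Lean document; each statement's English description precedes it below -/
import Mathlib

section
/- For all integers d₁, d₂, d₃, the coefficient of H₁²H₂²H₃ in (homogeneous degree-4 component of [X]·σ) · (d₁H₁ + d₂H₂ + d₃H₃) equals 36(d₁+d₂) + 24d₃. (This is the Chern invariant ∫_X c₂(T_X)c₁(E) for the line bundle E = O(d₁,d₂,d₃)|_X.) -/
open MvPolynomial Finset

noncomputable section

/-- The three hyperplane classes `H₁, H₂, H₃` of `ℙ²×ℙ²×ℙ¹`,
as variables of the polynomial ring `ℤ[H₁,H₂,H₃]`. -/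
def H1 : MvPolynomial (Fin 3) ℤ := X 0
def H2 : MvPolynomial (Fin 3) ℤ := X 1
def H3 : MvPolynomial (Fin 3) ℤ := X 2

/-- `∫p` : the coefficient of `H₁²H₂²H₃` in `p`, i.e. the degree map of
`ℙ²×ℙ²×ℙ¹` normalized by `H₁·H₁·H₂·H₂·H₃ = 1`. -/
def intX (p : MvPolynomial (Fin 3) ℤ) : ℤ :=
  coeff (Finsupp.single 0 2 + Finsupp.single 1 2 + Finsupp.single 2 1) p

/-- `[X] = (2H₁+2H₂)(H₁+H₂+2H₃)`, the class of the complete-intersection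
Calabi-Yau 3-fold `X ⊂ ℙ²×ℙ²×ℙ¹` cut out by a section of `O(2,2,0) ⊕ O(1,1,2)`. -/
def Xcls : MvPolynomial (Fin 3) ℤ := (2 * H1 + 2 * H2) * (H1 + H2 + 2 * H3)

/-- The pushforward of `c₁(O(d₁,d₂,d₃)|_X)`, i.e. the linear form `d₁H₁+d₂H₂+d₃H₃`. -/
def L (d₁ d₂ d₃ : ℤ) : MvPolynomial (Fin 3) ℤ := C d₁ * H1 + C d₂ * H2 + C d₃ * H3

/-- `σ = (1+H₁)³(1+H₂)³(1+H₃)² · (Σ_{k<6} (−(2H₁+2H₂))^k) · (Σ_{k<6} (−(H₁+H₂+2H₃))^k)`,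
the truncated total Chern class of `T_X` divided by `[X]` (adjunction formula with
truncated geometric series for the inverses). -/
def sigmaX : MvPolynomial (Fin 3) ℤ :=
  (1 + H1) ^ 3 * (1 + H2) ^ 3 * (1 + H3) ^ 2 *
    (∑ k ∈ Finset.range 6, (-(2 * H1 + 2 * H2)) ^ k) *
    (∑ k ∈ Finset.range 6, (-(H1 + H2 + 2 * H3)) ^ k)


-- ### Auxiliary machinery

/-- The exponent vector of `H₁²H₂²H₃`. -/
def mm : Fin 3 →₀ ℕ := Finsupp.single 0 2 + Finsupp.single 1 2 + Finsupp.single 2 1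

lemma intX_def (p : MvPolynomial (Fin 3) ℤ) : intX p = coeff mm p := rfl

lemma mm_degree : mm.degree = 5 := by
  simp [mm, Finsupp.degree_eq_weight_one, map_add, Finsupp.weight_apply,
    Finsupp.sum_single_index]

lemma coeff_term (c : ℤ) (a b e : ℕ) :
    coeff mm (C c * X 0 ^ a * X 1 ^ b * X 2 ^ e : MvPolynomial (Fin 3) ℤ)
      = if a = 2 ∧ b = 2 ∧ e = 1 then c else 0 := by
  have h : (C c * X 0 ^ a * X 1 ^ b * X 2 ^ e : MvPolynomial (Fin 3) ℤ)
      = monomial (Finsupp.single 0 a + Finsupp.single 1 b + Finsupp.single 2 e) c := by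
    rw [X_pow_eq_monomial, X_pow_eq_monomial, X_pow_eq_monomial, C_mul_monomial,
      monomial_mul, monomial_mul, mul_one, mul_one, mul_one]
  rw [h, coeff_monomial]
  congr 1
  simp only [eq_iff_iff]
  constructor
  · intro hEq
    have h0 := congrArg (fun f => f 0) hEq
    have h1 := congrArg (fun f => f 1) hEq
    have h2 := congrArg (fun f => f 2) hEq
    simp [mm, Finsupp.single_apply] at h0 h1 h2
    omega
  · rintro ⟨rfl, rfl, rfl⟩; rfl

lemma coeff_kill0 (A : MvPolynomial (Fin 3) ℤ) : coeff mm (X 0 ^ 3 * A) = 0 := by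
  rw [X_pow_eq_monomial, coeff_monomial_mul', if_neg]
  intro hle
  have := hle 0
  simp [mm, Finsupp.single_apply] at this

lemma coeff_kill1 (A : MvPolynomial (Fin 3) ℤ) : coeff mm (X 1 ^ 3 * A) = 0 := by
  rw [X_pow_eq_monomial, coeff_monomial_mul', if_neg]
  intro hle
  have := hle 1
  simp [mm, Finsupp.single_apply] at this

lemma coeff_kill2 (A : MvPolynomial (Fin 3) ℤ) : coeff mm (X 2 ^ 2 * A) = 0 := by
  rw [X_pow_eq_monomial, coeff_monomial_mul', if_neg]
  intro hle
  have := hle 2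
  simp [mm, Finsupp.single_apply] at this

lemma homog_kill {q r : MvPolynomial (Fin 3) ℤ} {d : ℕ} (hq : q.IsHomogeneous d)
    (hd : 5 < d) : coeff mm (q * r) = 0 := by
  rw [coeff_mul]
  apply Finset.sum_eq_zero
  rintro ⟨u, v⟩ huv
  have hu : u + v = mm := Finset.HasAntidiagonal.mem_antidiagonal.mp huv
  have hdeg : u.degree + v.degree = 5 := by
    have h' := congrArg Finsupp.degree hu
    rw [mm_degree] at h'
    simp only [Finsupp.degree_eq_weight_one, map_add] at h' ⊢
    exact h'
  rw [hq.coeff_eq_zero (by omega : u.degree ≠ d), zero_mul]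

lemma homog1 (a b c : ℤ) :
    (C a * X 0 + C b * X 1 + C c * X 2 : MvPolynomial (Fin 3) ℤ).IsHomogeneous 1 :=
  ((isHomogeneous_C_mul_X a 0).add (isHomogeneous_C_mul_X b 1)).add
    (isHomogeneous_C_mul_X c 2)

lemma homog_lin1 : ((2 : MvPolynomial (Fin 3) ℤ) * X 0 + 2 * X 1).IsHomogeneous 1 := by
  have h : ((2 : MvPolynomial (Fin 3) ℤ) * X 0 + 2 * X 1)
      = C 2 * X 0 + C 2 * X 1 + C 0 * X 2 := by
    simp only [map_ofNat, map_zero]; ring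
  rw [h]; exact homog1 2 2 0

lemma homog_lin2 : (X 0 + X 1 + (2 : MvPolynomial (Fin 3) ℤ) * X 2).IsHomogeneous 1 := by
  have h : (X 0 + X 1 + (2 : MvPolynomial (Fin 3) ℤ) * X 2)
      = C 1 * X 0 + C 1 * X 1 + C 2 * X 2 := by
    simp only [map_ofNat, map_one]; ring
  rw [h]; exact homog1 1 1 2

lemma homog_L (d₁ d₂ d₃ : ℤ) : (L d₁ d₂ d₃).IsHomogeneous 1 := by
  rw [L, H1, H2, H3]; exact homog1 d₁ d₂ d₃

lemma homog_K1 (d₁ d₂ d₃ : ℤ) :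
    ((2 * X 0 + 2 * X 1) * (X 0 + X 1 + 2 * X 2) * (2 * X 0 + 2 * X 1) ^ 3
      * L d₁ d₂ d₃ : MvPolynomial (Fin 3) ℤ).IsHomogeneous 6 := by
  have h := ((homog_lin1.mul homog_lin2).mul (homog_lin1.pow 3)).mul (homog_L d₁ d₂ d₃)
  norm_num at h
  exact h

lemma homog_K2 (d₁ d₂ d₃ : ℤ) :
    ((2 * X 0 + 2 * X 1) * (X 0 + X 1 + 2 * X 2) * (X 0 + X 1 + 2 * X 2) ^ 3
      * L d₁ d₂ d₃ : MvPolynomial (Fin 3) ℤ).IsHomogeneous 6 := by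
  have h := ((homog_lin1.mul homog_lin2).mul (homog_lin2.pow 3)).mul (homog_L d₁ d₂ d₃)
  norm_num at h
  exact h

lemma intX_hc (p q : MvPolynomial (Fin 3) ℤ) (hq : q.IsHomogeneous 1) :
    coeff mm (homogeneousComponent 4 p * q) = coeff mm (p * q) := by
  conv_rhs => rw [← sum_homogeneousComponent p]
  rw [Finset.sum_mul, coeff_sum]
  symm
  apply Finset.sum_eq_single
  · intro i _ hne
    exact ((homogeneousComponent_isHomogeneous i p).mul hq).coeff_eq_zero
      (by rw [mm_degree]; omega)
  · intro h4
    rw [homogeneousComponent_eq_zero, zero_mul, coeff_zero]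
    simp only [Finset.mem_range, not_lt] at h4
    omega

lemma redstep {E f E' A B C : MvPolynomial (Fin 3) ℤ}
    (h : E * f = E' + X 0 ^ 3 * A + X 1 ^ 3 * B + X 2 ^ 2 * C)
    {r : MvPolynomial (Fin 3) ℤ} :
    coeff mm (E * (f * r)) = coeff mm (E' * r) := by
  have e : E * (f * r)
      = E' * r + X 0 ^ 3 * (A * r) + X 1 ^ 3 * (B * r) + X 2 ^ 2 * (C * r) := by
    rw [← mul_assoc, h]; ring
  rw [e, coeff_add, coeff_add, coeff_add, coeff_kill0, coeff_kill1, coeff_kill2,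
    add_zero, add_zero, add_zero]

set_option maxHeartbeats 8000000 in
/-- `∫_X c₂(T_X)c₁(E) = 36(d₁+d₂) + 24d₃` for `E = O(d₁,d₂,d₃)|_X`: the coefficient of
`H₁²H₂²H₃` in (degree-4 component of `[X]·σ`) · `(d₁H₁+d₂H₂+d₃H₃)`. -/
theorem statement3 (d₁ d₂ d₃ : ℤ) :
    intX (homogeneousComponent 4 (Xcls * sigmaX) * L d₁ d₂ d₃) =
      36 * (d₁ + d₂) + 24 * d₃ := by
  rw [intX_def, intX_hc _ _ (homog_L d₁ d₂ d₃)]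
  simp only [Xcls, sigmaX, H1, H2, H3]
  have hS1 : (∑ k ∈ Finset.range 6, (-(2 * X 0 + 2 * X 1)) ^ k : MvPolynomial (Fin 3) ℤ) =
      (1 - (2 * X 0 + 2 * X 1) + (2 * X 0 + 2 * X 1) ^ 2) + (2 * X 0 + 2 * X 1) ^ 3 * (-1 + (2 * X 0 + 2 * X 1) - (2 * X 0 + 2 * X 1) ^ 2) := by
    simp only [Finset.sum_range_succ, Finset.sum_range_zero]
    ring
  have hS2 : (∑ k ∈ Finset.range 6, (-(X 0 + X 1 + 2 * X 2)) ^ k : MvPolynomial (Fin 3) ℤ) =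
      (1 - (X 0 + X 1 + 2 * X 2) + (X 0 + X 1 + 2 * X 2) ^ 2) + (X 0 + X 1 + 2 * X 2) ^ 3 * (-1 + (X 0 + X 1 + 2 * X 2) - (X 0 + X 1 + 2 * X 2) ^ 2) := by
    simp only [Finset.sum_range_succ, Finset.sum_range_zero]
    ring
  rw [hS1, hS2]
  have hsplit : ∀ a b c s1 s2 t1 t2 lp : MvPolynomial (Fin 3) ℤ,
      (2 * X 0 + 2 * X 1) * (X 0 + X 1 + 2 * X 2) * (a * b * c * (s1 + (2 * X 0 + 2 * X 1) ^ 3 * t1) * (s2 + (X 0 + X 1 + 2 * X 2) ^ 3 * t2)) * lp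
      = (2 * X 1 + 2 * X 0) * ((X 0 + X 1 + 2 * X 2) * (a * (b * (c * (s1 * (s2 * lp))))))
        + ((2 * X 0 + 2 * X 1) * (X 0 + X 1 + 2 * X 2) * (2 * X 0 + 2 * X 1) ^ 3 * lp) * (a * b * c * t1 * (s2 + (X 0 + X 1 + 2 * X 2) ^ 3 * t2))
        + ((2 * X 0 + 2 * X 1) * (X 0 + X 1 + 2 * X 2) * (X 0 + X 1 + 2 * X 2) ^ 3 * lp) * (a * b * c * s1 * t2) := by
    intro a b c s1 s2 t1 t2 lp
    ring
  rw [hsplit, coeff_add, coeff_add, homog_kill (homog_K1 d₁ d₂ d₃) (by norm_num),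
    homog_kill (homog_K2 d₁ d₂ d₃) (by norm_num), add_zero, add_zero]
  have h2 : (((2 * X 1 + 2 * X 0)) * (X 0 + X 1 + 2 * X 2) : MvPolynomial (Fin 3) ℤ) =
      (4 * X 1 * X 2 + 2 * X 1 ^ 2 + 4 * X 0 * X 2 + 4 * X 0 * X 1 + 2 * X 0 ^ 2) + X 0 ^ 3 * 0 + X 1 ^ 3 * 0 + X 2 ^ 2 * 0 := by
    ring
  have h3 : (((4 * X 1 * X 2 + 2 * X 1 ^ 2 + 4 * X 0 * X 2 + 4 * X 0 * X 1 + 2 * X 0 ^ 2)) * (1 + X 0) ^ 3 : MvPolynomial (Fin 3) ℤ) =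
      (4 * X 1 * X 2 + 2 * X 1 ^ 2 + 4 * X 0 * X 2 + 4 * X 0 * X 1 + 12 * X 0 * X 1 * X 2 + 6 * X 0 * X 1 ^ 2 + 2 * X 0 ^ 2 + 12 * X 0 ^ 2 * X 2 + 12 * X 0 ^ 2 * X 1 + 12 * X 0 ^ 2 * X 1 * X 2 + 6 * X 0 ^ 2 * X 1 ^ 2) + X 0 ^ 3 * (6 + 12 * X 2 + 12 * X 1 + 4 * X 1 * X 2 + 2 * X 1 ^ 2 + 6 * X 0 + 4 * X 0 * X 2 + 4 * X 0 * X 1 + 2 * X 0 ^ 2) + X 1 ^ 3 * 0 + X 2 ^ 2 * 0 := by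
    ring
  have h4 : (((4 * X 1 * X 2 + 2 * X 1 ^ 2 + 4 * X 0 * X 2 + 4 * X 0 * X 1 + 12 * X 0 * X 1 * X 2 + 6 * X 0 * X 1 ^ 2 + 2 * X 0 ^ 2 + 12 * X 0 ^ 2 * X 2 + 12 * X 0 ^ 2 * X 1 + 12 * X 0 ^ 2 * X 1 * X 2 + 6 * X 0 ^ 2 * X 1 ^ 2)) * (1 + X 1) ^ 3 : MvPolynomial (Fin 3) ℤ) =
      (4 * X 1 * X 2 + 2 * X 1 ^ 2 + 12 * X 1 ^ 2 * X 2 + 4 * X 0 * X 2 + 4 * X 0 * X 1 + 24 * X 0 * X 1 * X 2 + 18 * X 0 * X 1 ^ 2 + 48 * X 0 * X 1 ^ 2 * X 2 + 2 * X 0 ^ 2 + 12 * X 0 ^ 2 * X 2 + 18 * X 0 ^ 2 * X 1 + 48 * X 0 ^ 2 * X 1 * X 2 + 48 * X 0 ^ 2 * X 1 ^ 2 + 72 * X 0 ^ 2 * X 1 ^ 2 * X 2) + X 0 ^ 3 * 0 + X 1 ^ 3 * (6 + 12 * X 2 + 6 * X 1 + 4 * X 1 * X 2 + 2 * X 1 ^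 2 + 30 * X 0 + 40 * X 0 * X 2 + 22 * X 0 * X 1 + 12 * X 0 * X 1 * X 2 + 6 * X 0 * X 1 ^ 2 + 56 * X 0 ^ 2 + 48 * X 0 ^ 2 * X 2 + 30 * X 0 ^ 2 * X 1 + 12 * X 0 ^ 2 * X 1 * X 2 + 6 * X 0 ^ 2 * X 1 ^ 2) + X 2 ^ 2 * 0 := by
    ring
  have h5 : (((4 * X 1 * X 2 + 2 * X 1 ^ 2 + 12 * X 1 ^ 2 * X 2 + 4 * X 0 * X 2 + 4 * X 0 * X 1 + 24 * X 0 * X 1 * X 2 + 18 * X 0 * X 1 ^ 2 + 48 * X 0 * X 1 ^ 2 * X 2 + 2 * X 0 ^ 2 + 12 * X 0 ^ 2 * X 2 + 18 * X 0 ^ 2 * X 1 + 48 * X 0 ^ 2 * X 1 * X 2 + 48 * X 0 ^ 2 * X 1 ^ 2 + 72 * X 0 ^ 2 * X 1 ^ 2 * X 2)) * (1 + X 2) ^ 2 : MvPolynomial (Fin 3) ℤ) =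
      (4 * X 1 * X 2 + 2 * X 1 ^ 2 + 16 * X 1 ^ 2 * X 2 + 4 * X 0 * X 2 + 4 * X 0 * X 1 + 32 * X 0 * X 1 * X 2 + 18 * X 0 * X 1 ^ 2 + 84 * X 0 * X 1 ^ 2 * X 2 + 2 * X 0 ^ 2 + 16 * X 0 ^ 2 * X 2 + 18 * X 0 ^ 2 * X 1 + 84 * X 0 ^ 2 * X 1 * X 2 + 48 * X 0 ^ 2 * X 1 ^ 2 + 168 * X 0 ^ 2 * X 1 ^ 2 * X 2) + X 0 ^ 3 * 0 + X 1 ^ 3 * 0 + X 2 ^ 2 * (8 * X 1 + 4 * X 1 * X 2 + 26 * X 1 ^ 2 + 12 * X 1 ^ 2 * X 2 + 8 * X 0 + 4 * X 0 * X 2 + 52 * X 0 * X 1 + 24 * X 0 * X 1 * X 2 + 114 * X 0 * X 1 ^ 2 + 48 * X 0 * X 1 ^ 2 * X 2 + 26 * X 0 ^ 2 + 12 * X 0 ^ 2 * X 2 + 114 * X 0 ^ 2 * X 1 + 48 * X 0 ^ 2 * X 1 * X 2 + 192 * X 0 ^ 2 * X 1 ^ 2 + 72 * X 0 ^ 2 *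 X 1 ^ 2 * X 2) := by
    ring
  have h6 : (((4 * X 1 * X 2 + 2 * X 1 ^ 2 + 16 * X 1 ^ 2 * X 2 + 4 * X 0 * X 2 + 4 * X 0 * X 1 + 32 * X 0 * X 1 * X 2 + 18 * X 0 * X 1 ^ 2 + 84 * X 0 * X 1 ^ 2 * X 2 + 2 * X 0 ^ 2 + 16 * X 0 ^ 2 * X 2 + 18 * X 0 ^ 2 * X 1 + 84 * X 0 ^ 2 * X 1 * X 2 + 48 * X 0 ^ 2 * X 1 ^ 2 + 168 * X 0 ^ 2 * X 1 ^ 2 * X 2)) * (1 - (2 * X 0 + 2 * X 1) + (2 * X 0 + 2 * X 1) ^ 2) : MvPolynomial (Fin 3) ℤ) =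
      (4 * X 1 * X 2 + 2 * X 1 ^ 2 + 8 * X 1 ^ 2 * X 2 + 4 * X 0 * X 2 + 4 * X 0 * X 1 + 16 * X 0 * X 1 * X 2 + 6 * X 0 * X 1 ^ 2 + 36 * X 0 * X 1 ^ 2 * X 2 + 2 * X 0 ^ 2 + 8 * X 0 ^ 2 * X 2 + 6 * X 0 ^ 2 * X 1 + 36 * X 0 ^ 2 * X 1 * X 2 + 24 * X 0 ^ 2 * X 1 ^ 2 + 216 * X 0 ^ 2 * X 1 ^ 2 * X 2) + X 0 ^ 3 * ((-4) + (-16) * X 2 + (-4) * X 1 + 88 * X 1 * X 2 + 120 * X 1 ^ 2 + 672 * X 1 ^ 2 * X 2 + 384 * X 1 ^ 3 + 1344 * X 1 ^ 3 * X 2 + 8 * X 0 + 64 * X 0 * X 2 + 72 * X 0 * X 1 + 336 * X 0 * X 1 * X 2 + 192 * X 0 * X 1 ^ 2 + 672 * X 0 * X 1 ^ 2 * X 2) + X 1 ^ 3 * ((-4) + (-16) * X 2 + 8 * X 1 + 64 * X 1 * X 2 + (-4) * X 0 + 88 * X 0 * X 2 + 72 * X 0 * X 1 + 336 * X 0 *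 X 1 * X 2 + 120 * X 0 ^ 2 + 672 * X 0 ^ 2 * X 2 + 192 * X 0 ^ 2 * X 1 + 672 * X 0 ^ 2 * X 1 * X 2) + X 2 ^ 2 * 0 := by
    ring
  have h7 : (((4 * X 1 * X 2 + 2 * X 1 ^ 2 + 8 * X 1 ^ 2 * X 2 + 4 * X 0 * X 2 + 4 * X 0 * X 1 + 16 * X 0 * X 1 * X 2 + 6 * X 0 * X 1 ^ 2 + 36 * X 0 * X 1 ^ 2 * X 2 + 2 * X 0 ^ 2 + 8 * X 0 ^ 2 * X 2 + 6 * X 0 ^ 2 * X 1 + 36 * X 0 ^ 2 * X 1 * X 2 + 24 * X 0 ^ 2 * X 1 ^ 2 + 216 * X 0 ^ 2 * X 1 ^ 2 * X 2)) * (1 - (X 0 + X 1 + 2 * X 2) + (X 0 + X 1 + 2 * X 2) ^ 2) : MvPolynomial (Fin 3) ℤ) =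
      (4 * X 1 * X 2 + 2 * X 1 ^ 2 + 4 * X 0 * X 2 + 4 * X 0 * X 1 + 36 * X 0 * X 1 ^ 2 * X 2 + 2 * X 0 ^ 2 + 36 * X 0 ^ 2 * X 1 * X 2 + 24 * X 0 ^ 2 * X 1 ^ 2 + 192 * X 0 ^ 2 * X 1 ^ 2 * X 2) + X 0 ^ 3 * ((-2) + 4 * X 2 + 32 * X 2 ^ 2 + 2 * X 1 + 20 * X 1 * X 2 + 144 * X 1 * X 2 ^ 2 + (-6) * X 1 ^ 2 + (-12) * X 1 ^ 2 * X 2 + 864 * X 1 ^ 2 * X 2 ^ 2 + 48 * X 1 ^ 3 + 432 * X 1 ^ 3 * X 2 + 2 * X 0 + 8 * X 0 * X 2 + 6 * X 0 * X 1 + 36 * X 0 * X 1 * X 2 + 24 * X 0 * X 1 ^ 2 + 216 * X 0 * X 1 ^ 2 * X 2) + X 1 ^ 3 * ((-2) + 4 * X 2 + 32 * X 2 ^ 2 + 2 * X 1 + 8 * X 1 * X 2 + 2 * X 0 + 20 * X 0 * X 2 + 144 * X 0 * X 2 ^ 2 + 6 * X 0 * X 1 + 36 * X 0 * X 1 * X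 2 + (-6) * X 0 ^ 2 + (-12) * X 0 ^ 2 * X 2 + 864 * X 0 ^ 2 * X 2 ^ 2 + 24 * X 0 ^ 2 * X 1 + 216 * X 0 ^ 2 * X 1 * X 2) + X 2 ^ 2 * ((-8) * X 1 + 16 * X 1 * X 2 + 8 * X 1 ^ 2 + 32 * X 1 ^ 2 * X 2 + (-8) * X 0 + 16 * X 0 * X 2 + 16 * X 0 * X 1 + 64 * X 0 * X 1 * X 2 + 48 * X 0 * X 1 ^ 2 + 144 * X 0 * X 1 ^ 2 * X 2 + 8 * X 0 ^ 2 + 32 * X 0 ^ 2 * X 2 + 48 * X 0 ^ 2 * X 1 + 144 * X 0 ^ 2 * X 1 * X 2 + (-48) * X 0 ^ 2 * X 1 ^ 2 + 864 * X 0 ^ 2 * X 1 ^ 2 * X 2) := by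
    ring
  rw [redstep h2, redstep h3, redstep h4, redstep h5, redstep h6, redstep h7]
  have efin : (((4 * X 1 * X 2 + 2 * X 1 ^ 2 + 4 * X 0 * X 2 + 4 * X 0 * X 1 + 36 * X 0 * X 1 ^ 2 * X 2 + 2 * X 0 ^ 2 + 36 * X 0 ^ 2 * X 1 * X 2 + 24 * X 0 ^ 2 * X 1 ^ 2 + 192 * X 0 ^ 2 * X 1 ^ 2 * X 2)) * L d₁ d₂ d₃ : MvPolynomial (Fin 3) ℤ) =
      C d₁ * (C (4) * X 0 ^ 1 * X 1 ^ 1 * X 2 ^ 1 + C (2) * X 0 ^ 1 * X 1 ^ 2 * X 2 ^ 0 + C (4) * X 0 ^ 2 * X 1 ^ 0 * X 2 ^ 1 + C (4) * X 0 ^ 2 * X 1 ^ 1 * X 2 ^ 0 + C (36) * X 0 ^ 2 * X 1 ^ 2 * X 2 ^ 1 + C (2) * X 0 ^ 3 * X 1 ^ 0 * X 2 ^ 0 + C (36) * X 0 ^ 3 * X 1 ^ 1 * X 2 ^ 1 + C (24) * X 0 ^ 3 * X 1 ^ 2 * X 2 ^ 0 + C (192) * X 0 ^ 3 * X 1 ^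 2 * X 2 ^ 1)
      + C d₂ * (C (4) * X 0 ^ 0 * X 1 ^ 2 * X 2 ^ 1 + C (2) * X 0 ^ 0 * X 1 ^ 3 * X 2 ^ 0 + C (4) * X 0 ^ 1 * X 1 ^ 1 * X 2 ^ 1 + C (4) * X 0 ^ 1 * X 1 ^ 2 * X 2 ^ 0 + C (36) * X 0 ^ 1 * X 1 ^ 3 * X 2 ^ 1 + C (2) * X 0 ^ 2 * X 1 ^ 1 * X 2 ^ 0 + C (36) * X 0 ^ 2 * X 1 ^ 2 * X 2 ^ 1 + C (24) * X 0 ^ 2 * X 1 ^ 3 * X 2 ^ 0 + C (192) * X 0 ^ 2 * X 1 ^ 3 * X 2 ^ 1)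
      + C d₃ * (C (4) * X 0 ^ 0 * X 1 ^ 1 * X 2 ^ 2 + C (2) * X 0 ^ 0 * X 1 ^ 2 * X 2 ^ 1 + C (4) * X 0 ^ 1 * X 1 ^ 0 * X 2 ^ 2 + C (4) * X 0 ^ 1 * X 1 ^ 1 * X 2 ^ 1 + C (36) * X 0 ^ 1 * X 1 ^ 2 * X 2 ^ 2 + C (2) * X 0 ^ 2 * X 1 ^ 0 * X 2 ^ 1 + C (36) * X 0 ^ 2 * X 1 ^ 1 * X 2 ^ 2 + C (24) * X 0 ^ 2 * X 1 ^ 2 * X 2 ^ 1 + C (192) * X 0 ^ 2 * X 1 ^ 2 * X 2 ^ 2) := by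
    rw [L, H1, H2, H3]
    simp only [map_ofNat, map_neg, map_one, map_zero]
    ring
  rw [efin, coeff_add, coeff_add, coeff_C_mul, coeff_C_mul, coeff_C_mul]
  simp only [coeff_add, coeff_term]
  norm_num
  try ring

end
end

section
/- For all integers d₁, d₂, d₃, e₁, e₂, e₃, setting α₁ = d₁H₁+d₂H₂+d₃H₃, α₂ = d₂H₁+d₁H₂+d₃H₃ and β = e₁H₁+e₂H₂+e₃H₃, the coefficient of H₁²H₂²H₃ in [X]·(α₁·β·(α₁+β) − α₂·β·(α₂+β)) equals −4(d₁−d₂)(e₁−e₂)((d₁+d₂+d₃)+(e₁+e₂+e₃)). In particular, whenever (d₁−d₂)(e₁−e₂)((d₁+d₂+d₃)+(e₁+e₂+e₃)) ≠ 0, the rank-2 bundles L₁⊕L₃ and L₂⊕L₃ on X (where L₁ = O(d₁,d₂,d₃)|_X, L₂ = O(d₂,d₁,d₃)|_X, L₃ = O(e₁,e₂,e₃)|_X) have different Chern invariants ∫c₂(E)c₁(E), even though L₁ and L₂ are algebraically cobordant; hence direct sum is not compatible with algebraic cobordism of vector bundles. -/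
open MvPolynomial Finset

noncomputable section

set_option maxHeartbeats 3000000 in
lemma key9 (d₁ d₂ d₃ e₁ e₂ e₃ : ℤ) :
    Xcls * (L d₁ d₂ d₃ * L e₁ e₂ e₃ * (L d₁ d₂ d₃ + L e₁ e₂ e₃) -
        L d₂ d₁ d₃ * L e₁ e₂ e₃ * (L d₂ d₁ d₃ + L e₁ e₂ e₃)) =
      C (4*d₂*e₃ ^ 2 + 8*d₂*d₃*e₃ - 4*d₁*e₃ ^ 2 - 8*d₁*d₃*e₃) * H1 ^ 0 * H2 ^ 2 * H3 ^ 3 +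
      C (2*d₂*e₃ ^ 2 + 8*d₂*e₂*e₃ + 4*d₂*d₃*e₃ + 8*d₂*d₃*e₂ + 4*d₂ ^ 2*e₃ - 2*d₁*e₃ ^ 2 - 8*d₁*e₂*e₃ - 4*d₁*d₃*e₃ - 8*d₁*d₃*e₂ - 4*d₁ ^ 2*e₃) * H1 ^ 0 * H2 ^ 3 * H3 ^ 2 +
      C (4*d₂*e₂*e₃ + 4*d₂*e₂ ^ 2 + 4*d₂*d₃*e₂ + 2*d₂ ^ 2*e₃ + 4*d₂ ^ 2*e₂ - 4*d₁*e₂*e₃ - 4*d₁*e₂ ^ 2 - 4*d₁*d₃*e₂ - 2*d₁ ^ 2*e₃ - 4*d₁ ^ 2*e₂) * H1 ^ 0 * H2 ^ 4 * H3 ^ 1 +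
      C (2*d₂*e₂ ^ 2 + 2*d₂ ^ 2*e₂ - 2*d₁*e₂ ^ 2 - 2*d₁ ^ 2*e₂) * H1 ^ 0 * H2 ^ 5 * H3 ^ 0 +
      C (2*d₂*e₃ ^ 2 + 8*d₂*e₁*e₃ + 4*d₂*d₃*e₃ + 8*d₂*d₃*e₁ + 4*d₂ ^ 2*e₃ - 2*d₁*e₃ ^ 2 - 8*d₁*e₁*e₃ - 4*d₁*d₃*e₃ - 8*d₁*d₃*e₁ - 4*d₁ ^ 2*e₃) * H1 ^ 1 * H2 ^ 2 * H3 ^ 2 +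
      C (4*d₂*e₂*e₃ + 4*d₂*e₁*e₃ + 8*d₂*e₁*e₂ + 4*d₂*d₃*e₂ + 4*d₂*d₃*e₁ + 4*d₂ ^ 2*e₃ + 4*d₂ ^ 2*e₂ + 4*d₂ ^ 2*e₁ - 4*d₁*e₂*e₃ - 4*d₁*e₁*e₃ - 8*d₁*e₁*e₂ - 4*d₁*d₃*e₂ - 4*d₁*d₃*e₁ - 4*d₁ ^ 2*e₃ - 4*d₁ ^ 2*e₂ - 4*d₁ ^ 2*e₁) * H1 ^ 1 * H2 ^ 3 * H3 ^ 1 +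
      C (2*d₂*e₂ ^ 2 + 4*d₂*e₁*e₂ + 4*d₂ ^ 2*e₂ + 2*d₂ ^ 2*e₁ - 2*d₁*e₂ ^ 2 - 4*d₁*e₁*e₂ - 4*d₁ ^ 2*e₂ - 2*d₁ ^ 2*e₁) * H1 ^ 1 * H2 ^ 4 * H3 ^ 0 +
      C (-4*d₂*e₃ ^ 2 - 8*d₂*d₃*e₃ + 4*d₁*e₃ ^ 2 + 8*d₁*d₃*e₃) * H1 ^ 2 * H2 ^ 0 * H3 ^ 3 +
      C (-2*d₂*e₃ ^ 2 - 8*d₂*e₂*e₃ - 4*d₂*d₃*e₃ - 8*d₂*d₃*e₂ - 4*d₂ ^ 2*e₃ + 2*d₁*e₃ ^ 2 + 8*d₁*e₂*e₃ + 4*d₁*d₃*e₃ + 8*d₁*d₃*e₂ + 4*d₁ ^ 2*e₃) * H1 ^ 2 * H2 ^ 1 * H3 ^ 2 +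
      C (-4*d₂*e₂*e₃ - 4*d₂*e₂ ^ 2 + 4*d₂*e₁*e₃ + 4*d₂*e₁ ^ 2 - 4*d₂*d₃*e₂ + 4*d₂*d₃*e₁ - 4*d₂ ^ 2*e₂ + 4*d₂ ^ 2*e₁ + 4*d₁*e₂*e₃ + 4*d₁*e₂ ^ 2 - 4*d₁*e₁*e₃ - 4*d₁*e₁ ^ 2 + 4*d₁*d₃*e₂ - 4*d₁*d₃*e₁ + 4*d₁ ^ 2*e₂ - 4*d₁ ^ 2*e₁) * H1 ^ 2 * H2 ^ 2 * H3 ^ 1 +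
      C (-2*d₂*e₂ ^ 2 + 4*d₂*e₁*e₂ + 2*d₂*e₁ ^ 2 + 4*d₂ ^ 2*e₁ + 2*d₁*e₂ ^ 2 - 4*d₁*e₁*e₂ - 2*d₁*e₁ ^ 2 - 4*d₁ ^ 2*e₁) * H1 ^ 2 * H2 ^ 3 * H3 ^ 0 +
      C (-2*d₂*e₃ ^ 2 - 8*d₂*e₁*e₃ - 4*d₂*d₃*e₃ - 8*d₂*d₃*e₁ - 4*d₂ ^ 2*e₃ + 2*d₁*e₃ ^ 2 + 8*d₁*e₁*e₃ + 4*d₁*d₃*e₃ + 8*d₁*d₃*e₁ + 4*d₁ ^ 2*e₃) * H1 ^ 3 * H2 ^ 0 * H3 ^ 2 +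
      C (-4*d₂*e₂*e₃ - 4*d₂*e₁*e₃ - 8*d₂*e₁*e₂ - 4*d₂*d₃*e₂ - 4*d₂*d₃*e₁ - 4*d₂ ^ 2*e₃ - 4*d₂ ^ 2*e₂ - 4*d₂ ^ 2*e₁ + 4*d₁*e₂*e₃ + 4*d₁*e₁*e₃ + 8*d₁*e₁*e₂ + 4*d₁*d₃*e₂ + 4*d₁*d₃*e₁ + 4*d₁ ^ 2*e₃ + 4*d₁ ^ 2*e₂ + 4*d₁ ^ 2*e₁) * H1 ^ 3 * H2 ^ 1 * H3 ^ 1 +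
      C (-2*d₂*e₂ ^ 2 - 4*d₂*e₁*e₂ + 2*d₂*e₁ ^ 2 - 4*d₂ ^ 2*e₂ + 2*d₁*e₂ ^ 2 + 4*d₁*e₁*e₂ - 2*d₁*e₁ ^ 2 + 4*d₁ ^ 2*e₂) * H1 ^ 3 * H2 ^ 2 * H3 ^ 0 +
      C (-4*d₂*e₁*e₃ - 4*d₂*e₁ ^ 2 - 4*d₂*d₃*e₁ - 2*d₂ ^ 2*e₃ - 4*d₂ ^ 2*e₁ + 4*d₁*e₁*e₃ + 4*d₁*e₁ ^ 2 + 4*d₁*d₃*e₁ + 2*d₁ ^ 2*e₃ + 4*d₁ ^ 2*e₁) * H1 ^ 4 * H2 ^ 0 * H3 ^ 1 +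
      C (-4*d₂*e₁*e₂ - 2*d₂*e₁ ^ 2 - 2*d₂ ^ 2*e₂ - 4*d₂ ^ 2*e₁ + 4*d₁*e₁*e₂ + 2*d₁*e₁ ^ 2 + 2*d₁ ^ 2*e₂ + 4*d₁ ^ 2*e₁) * H1 ^ 4 * H2 ^ 1 * H3 ^ 0 +
      C (-2*d₂*e₁ ^ 2 - 2*d₂ ^ 2*e₁ + 2*d₁*e₁ ^ 2 + 2*d₁ ^ 2*e₁) * H1 ^ 5 * H2 ^ 0 * H3 ^ 0 := by
  simp only [Xcls, L, map_add, map_mul, map_sub, map_neg, map_pow, map_ofNat]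
  ring

lemma tcoeff9 (q : ℤ) (a b c : ℕ) :
    intX (C q * H1 ^ a * H2 ^ b * H3 ^ c) = if a = 2 ∧ b = 2 ∧ c = 1 then q else 0 := by
  simp only [intX, H1, H2, H3, X_pow_eq_monomial]
  rw [mul_assoc, mul_assoc, coeff_C_mul]
  simp only [monomial_mul, one_mul, coeff_monomial]
  by_cases h : a = 2 ∧ b = 2 ∧ c = 1
  · obtain ⟨rfl, rfl, rfl⟩ := h
    rw [if_pos (add_assoc _ _ _).symm, if_pos ⟨rfl, rfl, rfl⟩, mul_one]
  · rw [if_neg h, if_neg, mul_zero]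
    intro hEq
    apply h
    have h0 := DFunLike.congr_fun hEq (0 : Fin 3)
    have h1 := DFunLike.congr_fun hEq (1 : Fin 3)
    have h2 := DFunLike.congr_fun hEq (2 : Fin 3)
    simp [Finsupp.single_apply] at h0 h1 h2
    exact ⟨h0, h1, h2⟩

lemma intX_add9 (p q : MvPolynomial (Fin 3) ℤ) : intX (p + q) = intX p + intX q := by
  simp [intX]

lemma intX_sub9 (p q : MvPolynomial (Fin 3) ℤ) : intX (p - q) = intX p - intX q := by
  simp [intX]

lemma main9 (d₁ d₂ d₃ e₁ e₂ e₃ : ℤ) :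
    intX (Xcls * (L d₁ d₂ d₃ * L e₁ e₂ e₃ * (L d₁ d₂ d₃ + L e₁ e₂ e₃) -
        L d₂ d₁ d₃ * L e₁ e₂ e₃ * (L d₂ d₁ d₃ + L e₁ e₂ e₃))) =
      -4 * (d₁ - d₂) * (e₁ - e₂) * ((d₁ + d₂ + d₃) + (e₁ + e₂ + e₃)) := by
  rw [key9]
  simp only [intX_add9, tcoeff9]
  norm_num
  ring

/-- Noncompatibility of direct sum with algebraic cobordism:
`∫c₂c₁(L₁⊕L₃) − ∫c₂c₁(L₂⊕L₃) = −4(d₁−d₂)(e₁−e₂)((d₁+d₂+d₃)+(e₁+e₂+e₃))` for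
`L₁ = O(d₁,d₂,d₃)|_X`, `L₂ = O(d₂,d₁,d₃)|_X`, `L₃ = O(e₁,e₂,e₃)|_X`; in particular the
two rank-2 bundles have different Chern invariants whenever the right side is nonzero. -/
theorem statement9 (d₁ d₂ d₃ e₁ e₂ e₃ : ℤ) :
    intX (Xcls * (L d₁ d₂ d₃ * L e₁ e₂ e₃ * (L d₁ d₂ d₃ + L e₁ e₂ e₃) -
        L d₂ d₁ d₃ * L e₁ e₂ e₃ * (L d₂ d₁ d₃ + L e₁ e₂ e₃))) =
      -4 * (d₁ - d₂) * (e₁ - e₂) * ((d₁ + d₂ + d₃) + (e₁ + e₂ + e₃)) ∧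
    ((d₁ - d₂) * (e₁ - e₂) * ((d₁ + d₂ + d₃) + (e₁ + e₂ + e₃)) ≠ 0 →
      intX (Xcls * (L d₁ d₂ d₃ * L e₁ e₂ e₃ * (L d₁ d₂ d₃ + L e₁ e₂ e₃))) ≠
      intX (Xcls * (L d₂ d₁ d₃ * L e₁ e₂ e₃ * (L d₂ d₁ d₃ + L e₁ e₂ e₃)))) := by
  have hmain := main9 d₁ d₂ d₃ e₁ e₂ e₃
  refine ⟨hmain, fun hne heq => hne ?_⟩
  rw [mul_sub, intX_sub9, heq, sub_self] at hmain
  have : (-4 : ℤ) * ((d₁ - d₂) * (e₁ - e₂) * ((d₁ + d₂ + d₃) + (e₁ + e₂ + e₃))) = 0 := by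
    linarith [hmain]
  omega

end
end

section
/- For all integers d₁, d₂, d₃, e₁, e₂, e₃, setting α₁ = d₁H₁+d₂H₂+d₃H₃, α₂ = d₂H₁+d₁H₂+d₃H₃ and β = e₁H₁+e₂H₂+e₃H₃, the coefficient of H₁²H₂²H₃ in [X]·((β−α₁)³ − (β−α₂)³) equals 12(d₁−d₂)(e₁−e₂)((e₁+e₂+e₃)−(d₁+d₂+d₃)). (This is the full simplification of the difference ∫_X c₁(Hom(L₁,L₃))³ − ∫_X c₁(Hom(L₂,L₃))³, where Hom(Lᵢ,L₃) = Lᵢ^∨⊗L₃ and L₁ = O(d₁,d₂,d₃)|_X, L₂ = O(d₂,d₁,d₃)|_X, L₃ = O(e₁,e₂,e₃)|_X.) In particular the difference is nonzero for general choices of the six integers, so Hom is not compatible with algebraic cobordism of vector bundles. -/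
open MvPolynomial Finset

noncomputable section

lemma num2' : (2 : MvPolynomial (Fin 3) ℤ) = C 2 := by norm_num
lemma num4' : (4 : MvPolynomial (Fin 3) ℤ) = C 4 := by norm_num
lemma num6' : (6 : MvPolynomial (Fin 3) ℤ) = C 6 := by norm_num
lemma num12' : (12 : MvPolynomial (Fin 3) ℤ) = C 12 := by norm_num
lemma num24' : (24 : MvPolynomial (Fin 3) ℤ) = C 24 := by norm_num

set_option maxHeartbeats 2000000 in
lemma key' (a b c : ℤ) : intX (Xcls * (C a * H1 + C b * H2 + C c * H3) ^ 3)
    = 12*a^2*b + 12*a*b^2 + 6*a^2*c + 24*a*b*c + 6*b^2*c := by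
  simp only [intX, Xcls, H1, H2, H3]
  ring_nf
  simp only [coeff_add, X_pow_eq_monomial, X, monomial_mul, monomial_pow,
    num2', num4', num6', num12', num24', ← C_pow, ← C_mul, C_mul_monomial, mul_one, one_mul,
    mul_assoc, mul_comm, mul_left_comm]
  simp only [C_mul_monomial, coeff_monomial]
  norm_num (config := { decide := true }) [Finsupp.ext_iff, Fin.forall_fin_succ,
    Finsupp.single_apply]

lemma Lsub (d₁ d₂ d₃ e₁ e₂ e₃ : ℤ) :
    L e₁ e₂ e₃ - L d₁ d₂ d₃ = C (e₁ - d₁) * H1 + C (e₂ - d₂) * H2 + C (e₃ - d₃) * H3 := by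
  simp only [L, C_sub]; ring

/-- Noncompatibility of `Hom` with algebraic cobordism:
`∫c₁(Hom(L₁,L₃))³ − ∫c₁(Hom(L₂,L₃))³ = 12(d₁−d₂)(e₁−e₂)((e₁+e₂+e₃)−(d₁+d₂+d₃))`
where `Hom(Lᵢ,L₃) = Lᵢ^∨⊗L₃` has first Chern class `β−αᵢ`; in particular the
difference is nonzero for general choices of the six integers. -/
theorem statement11 (d₁ d₂ d₃ e₁ e₂ e₃ : ℤ) :
    intX (Xcls * ((L e₁ e₂ e₃ - L d₁ d₂ d₃) ^ 3 - (L e₁ e₂ e₃ - L d₂ d₁ d₃) ^ 3)) =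
      12 * (d₁ - d₂) * (e₁ - e₂) * ((e₁ + e₂ + e₃) - (d₁ + d₂ + d₃)) ∧
    ((d₁ - d₂) * (e₁ - e₂) * ((e₁ + e₂ + e₃) - (d₁ + d₂ + d₃)) ≠ 0 →
      intX (Xcls * (L e₁ e₂ e₃ - L d₁ d₂ d₃) ^ 3) ≠
      intX (Xcls * (L e₁ e₂ e₃ - L d₂ d₁ d₃) ^ 3)) := by
  have h1 := key' (e₁ - d₁) (e₂ - d₂) (e₃ - d₃)
  have h2 := key' (e₁ - d₂) (e₂ - d₁) (e₃ - d₃)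
  rw [← Lsub] at h1 h2
  have hsplit : intX (Xcls * ((L e₁ e₂ e₃ - L d₁ d₂ d₃) ^ 3 - (L e₁ e₂ e₃ - L d₂ d₁ d₃) ^ 3))
      = intX (Xcls * (L e₁ e₂ e₃ - L d₁ d₂ d₃) ^ 3) -
        intX (Xcls * (L e₁ e₂ e₃ - L d₂ d₁ d₃) ^ 3) := by
    simp [intX, mul_sub, coeff_sub]
  have hmain : intX (Xcls * ((L e₁ e₂ e₃ - L d₁ d₂ d₃) ^ 3 - (L e₁ e₂ e₃ - L d₂ d₁ d₃) ^ 3)) =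
      12 * (d₁ - d₂) * (e₁ - e₂) * ((e₁ + e₂ + e₃) - (d₁ + d₂ + d₃)) := by
    rw [hsplit, h1, h2]; ring
  refine ⟨hmain, fun hne heq => hne ?_⟩
  have h0 : (12 : ℤ) * (d₁ - d₂) * (e₁ - e₂) * ((e₁ + e₂ + e₃) - (d₁ + d₂ + d₃)) = 0 := by
    rw [← hmain, hsplit, heq, sub_self]
  have h12 : (12 : ℤ) * ((d₁ - d₂) * (e₁ - e₂) * ((e₁ + e₂ + e₃) - (d₁ + d₂ + d₃))) = 0 := by
    linear_combination h0
  exact (mul_eq_zero.mp h12).resolve_left (by norm_num)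

end
end

section
/- Let R be a commutative ring and u : E → F an R-linear map between R-modules. Regard PolynomialModule R E and (PolynomialModule R F) × (PolynomialModule R E) as modules over the polynomial ring R[t], and let Φ be the R[t]-linear map sending q ∈ PolynomialModule R E to (−(u applied to q coefficientwise), t·q). Let M be the quotient of (PolynomialModule R F) × (PolynomialModule R E) by the range of Φ. Then for every c ∈ R, the quotient of M by the submodule (t − c)·M is, as an R-module, isomorphic to the quotient of F × E by the range of the R-linear map e ↦ (−u(e), c·e). (This realizes the one-parameter family over the affine line 𝔸¹ = Spec R[t] in the proof of the 'from exact sequence to direct sum' lemma, whose fiber at a unit c is F and whose fiber at c = 0 is E ⊕ G when 0 → E → F → G → 0 is exact.) -/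
open Polynomial

noncomputable section

variable {R : Type*} [CommRing R] {E F : Type*}
  [AddCommGroup E] [AddCommGroup F] [Module R E] [Module R F]

/-- Applying `u : E →ₗ[R] F` coefficientwise to polynomials with coefficients in `E`,
as an `R[X]`-linear map `PolynomialModule R E → PolynomialModule R F`. -/
def coeffwiseMap (u : E →ₗ[R] F) :
    PolynomialModule R E →ₗ[R[X]] PolynomialModule R F where
  toFun := PolynomialModule.map R u
  map_add' := map_add _
  map_smul' p q := by simpa using PolynomialModule.map_smul R u p q

/-- The `R[X]`-linear map `Φ : q ↦ (−(u applied coefficientwise to q), t·q)`. -/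
def degenMap (u : E →ₗ[R] F) :
    PolynomialModule R E →ₗ[R[X]] PolynomialModule R F × PolynomialModule R E :=
  (-(coeffwiseMap u)).prod
    (LinearMap.lsmul R[X] (PolynomialModule R E) (X : R[X]))

/-- The total space `M` of the one-parameter family over `𝔸¹ = Spec R[t]`:
the quotient of `(PolynomialModule R F) × (PolynomialModule R E)` by the range of `Φ`. -/
def degenFamily (u : E →ₗ[R] F) : Type _ :=
  (PolynomialModule R F × PolynomialModule R E) ⧸ LinearMap.range (degenMap u)

instance (u : E →ₗ[R] F) : AddCommGroup (degenFamily u) :=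
  inferInstanceAs <| AddCommGroup <|
    (PolynomialModule R F × PolynomialModule R E) ⧸ LinearMap.range (degenMap u)

instance (u : E →ₗ[R] F) : Module R[X] (degenFamily u) :=
  inferInstanceAs <| Module R[X] <|
    (PolynomialModule R F × PolynomialModule R E) ⧸ LinearMap.range (degenMap u)

instance (u : E →ₗ[R] F) : Module R (degenFamily u) :=
  inferInstanceAs <| Module R <|
    (PolynomialModule R F × PolynomialModule R E) ⧸ LinearMap.range (degenMap u)

instance (u : E →ₗ[R] F) : IsScalarTower R R[X] (degenFamily u) :=
  inferInstanceAs <| IsScalarTower R R[X] <|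
    (PolynomialModule R F × PolynomialModule R E) ⧸ LinearMap.range (degenMap u)

/-- The submodule `(t − c)·M` of the total space `M`. -/
def tcSubmodule (u : E →ₗ[R] F) (c : R) : Submodule R[X] (degenFamily u) :=
  Ideal.span {(X : R[X]) - C c} • (⊤ : Submodule R[X] (degenFamily u))

section Aux

variable {R : Type*} [CommRing R] {E F : Type*}
  [AddCommGroup E] [AddCommGroup F] [Module R E] [Module R F]

lemma aux_sub_single_eval_mem {M : Type*} [AddCommGroup M] [Module R M] (c : R)
    (q : PolynomialModule R M) :
    q - PolynomialModule.single R 0 (PolynomialModule.eval c q) ∈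
      (Ideal.span {(X : R[X]) - C c}) • (⊤ : Submodule R[X] (PolynomialModule R M)) := by
  induction q using PolynomialModule.induction_linear with
  | zero => simp
  | add f g hf hg =>
      have h := Submodule.add_mem _ hf hg
      convert h using 1
      rw [map_add, PolynomialModule.single_add]
      abel
  | single i m =>
      have key : PolynomialModule.single R i m -
          PolynomialModule.single R 0 (PolynomialModule.eval c (PolynomialModule.single R i m))
          = ((X : R[X]) ^ i - C (c ^ i)) • PolynomialModule.single R 0 m := by
        rw [sub_smul, PolynomialModule.eval_single, Polynomial.X_pow_eq_monomial,
          ← Polynomial.monomial_zero_left, PolynomialModule.monomial_smul_single,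
          PolynomialModule.monomial_smul_single]
        simp
      rw [key]
      refine Submodule.smul_mem_smul ?_ trivial
      refine Ideal.mem_span_singleton.mpr ?_
      simpa using sub_dvd_pow_sub_pow (X : R[X]) (C c) i

lemma aux_eval_map {M N : Type*} [AddCommGroup M] [Module R M] [AddCommGroup N] [Module R N]
    (c : R) (u : M →ₗ[R] N) (q : PolynomialModule R M) :
    PolynomialModule.eval c (PolynomialModule.map R u q) = u (PolynomialModule.eval c q) := by
  induction q using PolynomialModule.induction_linear with
  | zero => simp
  | add f g hf hg => rw [map_add, map_add, map_add, hf, hg, map_add]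
  | single i m =>
      rw [PolynomialModule.map_single, PolynomialModule.eval_single,
        PolynomialModule.eval_single, map_smul]

end Aux

/-- The fiber of the one-parameter degeneration at the parameter value `c`:
the quotient `M/(t−c)M` is, as an `R`-module, isomorphic to the quotient of `F × E`
by the range of `e ↦ (−u(e), c·e)`. -/
theorem statement15 (u : E →ₗ[R] F) (c : R) :
    Nonempty
      ((degenFamily u ⧸ tcSubmodule u c) ≃ₗ[R]
        ((F × E) ⧸ LinearMap.range ((-u).prod (c • (LinearMap.id : E →ₗ[R] E))))) := by
  classical
  set ψ : E →ₗ[R] F × E := (-u).prod (c • (LinearMap.id : E →ₗ[R] E)) with hψ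
  let V := PolynomialModule R F × PolynomialModule R E
  let S : Submodule R[X] V := LinearMap.range (degenMap u)
  let I : Ideal R[X] := Ideal.span {(X : R[X]) - C c}
  let T : Submodule R[X] V := I • (⊤ : Submodule R[X] V)
  -- Step 1: double quotient
  have h1 : tcSubmodule u c = T.map S.mkQ := by
    show I • (⊤ : Submodule R[X] (degenFamily u)) = _
    rw [Submodule.map_smul'', Submodule.map_top, Submodule.range_mkQ]
    rfl
  have h1' : (I • ⊤ : Submodule R[X] (V ⧸ S)) = T.map S.mkQ := h1
  let e1 : (degenFamily u ⧸ tcSubmodule u c) ≃ₗ[R[X]] (V ⧸ (S ⊔ T)) :=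
    (Submodule.quotEquivOfEq _ _ h1').trans (Submodule.quotientQuotientEquivQuotientSup S T)
  -- Step 2: evaluation
  let ev : V →ₗ[R] F × E :=
    (PolynomialModule.eval c).prodMap (PolynomialModule.eval c)
  let g : V →ₗ[R] (F × E) ⧸ LinearMap.range ψ := (LinearMap.range ψ).mkQ ∘ₗ ev
  have hgsurj : Function.Surjective g := by
    intro z
    obtain ⟨y, rfl⟩ := Submodule.mkQ_surjective _ z
    refine ⟨(PolynomialModule.single R 0 y.1, PolynomialModule.single R 0 y.2), ?_⟩
    have hy : ev (PolynomialModule.single R 0 y.1, PolynomialModule.single R 0 y.2) = y := by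
      refine Prod.ext ?_ ?_
      · show PolynomialModule.eval c (PolynomialModule.single R 0 y.1) = y.1
        rw [PolynomialModule.eval_single]; simp
      · show PolynomialModule.eval c (PolynomialModule.single R 0 y.2) = y.2
        rw [PolynomialModule.eval_single]; simp
    show Submodule.mkQ _ (ev _) = _
    rw [hy]
  have hcomm : ∀ q : PolynomialModule R E,
      ev (degenMap u q) = ψ (PolynomialModule.eval c q) := by
    intro q
    refine Prod.ext ?_ ?_
    · show PolynomialModule.eval c (-(PolynomialModule.map R u q))
        = -(u (PolynomialModule.eval c q))
      rw [map_neg, aux_eval_map]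
    · show PolynomialModule.eval c ((X : R[X]) • q) = c • (PolynomialModule.eval c q)
      rw [PolynomialModule.eval_smul, Polynomial.eval_X]
  have hTker : ∀ v ∈ T, g v = 0 := by
    intro v hv
    refine Submodule.smul_induction_on hv ?_ ?_
    · intro p hp w _
      obtain ⟨q, rfl⟩ := Ideal.mem_span_singleton.mp hp
      have hev : ev (((X - C c) * q) • w) = 0 := by
        have e1' : ev (((X - C c) * q) • w)
            = (PolynomialModule.eval c ((((X : R[X]) - C c) * q) • w.1),
               PolynomialModule.eval c ((((X : R[X]) - C c) * q) • w.2)) := rfl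
        rw [e1', PolynomialModule.eval_smul, PolynomialModule.eval_smul]
        simp
      show Submodule.mkQ _ (ev _) = 0
      rw [hev, map_zero]
    · intro x y hx hy
      rw [map_add, hx, hy, add_zero]
  have hinl : ∀ a : PolynomialModule R F,
      a ∈ (I • (⊤ : Submodule R[X] (PolynomialModule R F))) →
      ((a, (0 : PolynomialModule R E)) : V) ∈ T := by
    intro a ha
    have h := Submodule.mem_map_of_mem
      (f := LinearMap.inl R[X] (PolynomialModule R F) (PolynomialModule R E)) ha
    rw [Submodule.map_smul''] at h
    exact smul_mono_right I (le_top : _ ≤ (⊤ : Submodule R[X] V)) h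
  have hinr : ∀ a : PolynomialModule R E,
      a ∈ (I • (⊤ : Submodule R[X] (PolynomialModule R E))) →
      (((0 : PolynomialModule R F), a) : V) ∈ T := by
    intro a ha
    have h := Submodule.mem_map_of_mem
      (f := LinearMap.inr R[X] (PolynomialModule R F) (PolynomialModule R E)) ha
    rw [Submodule.map_smul''] at h
    exact smul_mono_right I (le_top : _ ≤ (⊤ : Submodule R[X] V)) h
  have hker : LinearMap.ker g = Submodule.restrictScalars R (S ⊔ T) := by
    ext v
    constructor
    · intro hv
      have hv' : ev v ∈ LinearMap.range ψ := (Submodule.Quotient.mk_eq_zero _).mp hv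
      obtain ⟨e, he⟩ := hv'
      have hc1 : (ψ e).1 = PolynomialModule.eval c v.1 := by rw [he]; rfl
      have hc2 : (ψ e).2 = PolynomialModule.eval c v.2 := by rw [he]; rfl
      -- the "division" part
      have hT1 : v - (PolynomialModule.single R 0 (PolynomialModule.eval c v.1),
          PolynomialModule.single R 0 (PolynomialModule.eval c v.2)) ∈ T := by
        have h := T.add_mem
          (hinl _ (aux_sub_single_eval_mem c v.1)) (hinr _ (aux_sub_single_eval_mem c v.2))
        convert h using 1
        refine Prod.ext ?_ ?_
        · show v.1 - _ = (v.1 - _) + 0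
          rw [add_zero]
        · show v.2 - _ = 0 + (v.2 - _)
          rw [zero_add]
      -- the constant part
      have hconst : ((PolynomialModule.single R 0 (ψ e).1,
          PolynomialModule.single R 0 (ψ e).2) : V) ∈ S ⊔ T := by
        have hΦ : degenMap u (PolynomialModule.single R 0 e)
            = (PolynomialModule.single R 0 (-(u e)), PolynomialModule.single R 1 e) := by
          refine Prod.ext ?_ ?_
          · show -(PolynomialModule.map R u (PolynomialModule.single R 0 e)) = _
            rw [PolynomialModule.map_single]
            show _ = PolynomialModule.single R 0 (-(u e))
            rw [eq_comm, eq_neg_iff_add_eq_zero, ← PolynomialModule.single_add, neg_add_cancel,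
              PolynomialModule.single_zero]
          · show (X : R[X]) • PolynomialModule.single R 0 e = _
            rw [← Polynomial.monomial_one_one_eq_X, PolynomialModule.monomial_smul_single]
            simp
        have hdiff : (((0 : PolynomialModule R F),
            PolynomialModule.single R 1 e - PolynomialModule.single R 0 (c • e)) : V) ∈ T := by
          refine hinr _ ?_
          have heq : PolynomialModule.single R 1 e - PolynomialModule.single R 0 (c • e)
              = ((X : R[X]) - C c) • PolynomialModule.single R 0 e := by
            rw [sub_smul, ← Polynomial.monomial_one_one_eq_X, ← Polynomial.monomial_zero_left,
              PolynomialModule.monomial_smul_single, PolynomialModule.monomial_smul_single]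
            simp
          rw [heq]
          exact Submodule.smul_mem_smul (Ideal.mem_span_singleton_self _) trivial
        have hS : degenMap u (PolynomialModule.single R 0 e) ∈ S :=
          ⟨PolynomialModule.single R 0 e, rfl⟩
        have h := Submodule.sub_mem _ (Submodule.mem_sup_left hS) (Submodule.mem_sup_right hdiff)
        convert h using 1
        rw [hΦ]
        refine Prod.ext ?_ ?_
        · show PolynomialModule.single R 0 (ψ e).1 = PolynomialModule.single R 0 (-(u e)) - 0
          rw [sub_zero]
          rfl
        · show PolynomialModule.single R 0 (ψ e).2
            = PolynomialModule.single R 1 e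
              - (PolynomialModule.single R 1 e - PolynomialModule.single R 0 (c • e))
          rw [sub_sub_cancel]
          rfl
      have hveq : v = (v - (PolynomialModule.single R 0 (PolynomialModule.eval c v.1),
          PolynomialModule.single R 0 (PolynomialModule.eval c v.2)))
          + (PolynomialModule.single R 0 (ψ e).1, PolynomialModule.single R 0 (ψ e).2) := by
        refine Prod.ext ?_ ?_
        · show v.1 = (v.1 - PolynomialModule.single R 0 (PolynomialModule.eval c v.1))
            + PolynomialModule.single R 0 (ψ e).1
          rw [hc1]; abel
        · show v.2 = (v.2 - PolynomialModule.single R 0 (PolynomialModule.eval c v.2))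
            + PolynomialModule.single R 0 (ψ e).2
          rw [hc2]; abel
      show v ∈ S ⊔ T
      rw [hveq]
      exact Submodule.add_mem _ (Submodule.mem_sup_right hT1) hconst
    · intro hv
      obtain ⟨s, hs, t, ht, rfl⟩ := Submodule.mem_sup.mp hv
      obtain ⟨q, rfl⟩ := hs
      have hgs : g (degenMap u q) = 0 := by
        show Submodule.mkQ _ (ev (degenMap u q)) = 0
        rw [hcomm]
        exact (Submodule.Quotient.mk_eq_zero _).mpr ⟨_, rfl⟩
      show g _ = 0
      rw [map_add, hgs, hTker t ht, add_zero]
  let e2 : (V ⧸ (S ⊔ T)) ≃ₗ[R] ((F × E) ⧸ LinearMap.range ψ) :=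
    ((Submodule.Quotient.restrictScalarsEquiv R (S ⊔ T)).symm.trans
      (Submodule.quotEquivOfEq _ _ hker.symm)).trans (g.quotKerEquivOfSurjective hgsurj)
  exact ⟨(e1.restrictScalars R).trans e2⟩


end
end
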